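/- The 2×2 matrices A₁ = I⊗σ_Z through A₉ = σ_Y⊗σ_Y of the Mermin–Peres magic square satisfy: each Aᵢ² = I, the three operators in each row and each column pairwise commute, each of the five single-line products (rows 1–3, columns 1–2) equals I, and the product of the third column A₃A₆A₉ equals −I. -/
import Mathlib


open Matrix
open scoped Kronecker

noncomputable def σX : Matrix (Fin 2) (Fin 2) ℂ := !![0, 1; 1, 0]
noncomputable def σY : Matrix (Fin 2) (Fin 2) ℂ := !![0, -Complex.I; Complex.I, 0]
noncomputable def σZ : Matrix (Fin 2) (Fin 2) ℂ := !![1, 0; 0, -1]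

noncomputable def A₁ : Matrix (Fin 2 × Fin 2) (Fin 2 × Fin 2) ℂ := (1 : Matrix (Fin 2) (Fin 2) ℂ) ⊗ₖ σZ
noncomputable def A₂ : Matrix (Fin 2 × Fin 2) (Fin 2 × Fin 2) ℂ := σZ ⊗ₖ (1 : Matrix (Fin 2) (Fin 2) ℂ)
noncomputable def A₃ : Matrix (Fin 2 × Fin 2) (Fin 2 × Fin 2) ℂ := σZ ⊗ₖ σZ
noncomputable def A₄ : Matrix (Fin 2 × Fin 2) (Fin 2 × Fin 2) ℂ := σX ⊗ₖ (1 : Matrix (Fin 2) (Fin 2) ℂ)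
noncomputable def A₅ : Matrix (Fin 2 × Fin 2) (Fin 2 × Fin 2) ℂ := (1 : Matrix (Fin 2) (Fin 2) ℂ) ⊗ₖ σX
noncomputable def A₆ : Matrix (Fin 2 × Fin 2) (Fin 2 × Fin 2) ℂ := σX ⊗ₖ σX
noncomputable def A₇ : Matrix (Fin 2 × Fin 2) (Fin 2 × Fin 2) ℂ := σX ⊗ₖ σZ
noncomputable def A₈ : Matrix (Fin 2 × Fin 2) (Fin 2 × Fin 2) ℂ := σZ ⊗ₖ σX
noncomputable def A₉ : Matrix (Fin 2 × Fin 2) (Fin 2 × Fin 2) ℂ := σY ⊗ₖ σY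

lemma neg_kron (A B : Matrix (Fin 2) (Fin 2) ℂ) : (-A) ⊗ₖ B = -(A ⊗ₖ B) := by
  ext ⟨i, j⟩ ⟨k, l⟩; simp [Matrix.kroneckerMap_apply]

lemma kron_neg (A B : Matrix (Fin 2) (Fin 2) ℂ) : A ⊗ₖ (-B) = -(A ⊗ₖ B) := by
  ext ⟨i, j⟩ ⟨k, l⟩; simp [Matrix.kroneckerMap_apply]

lemma hXX : σX * σX = 1 := by
  ext i j; fin_cases i <;> fin_cases j <;>
    simp [σX, Matrix.mul_fin_two, Matrix.one_fin_two]

lemma hYY : σY * σY = 1 := by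
  ext i j; fin_cases i <;> fin_cases j <;>
    simp [σY, Matrix.mul_fin_two, Matrix.one_fin_two]

lemma hZZ : σZ * σZ = 1 := by
  ext i j; fin_cases i <;> fin_cases j <;>
    simp [σZ, Matrix.mul_fin_two, Matrix.one_fin_two]

lemma hXZ : σX * σZ = (-1 : ℂ) • (σZ * σX) := by
  ext i j; fin_cases i <;> fin_cases j <;>
    simp [σX, σZ, Matrix.mul_fin_two, Matrix.smul_apply]

lemma hYX : σY * σX = (-1 : ℂ) • (σX * σY) := by
  ext i j; fin_cases i <;> fin_cases j <;>
    simp [σX, σY, Matrix.mul_fin_two, Matrix.smul_apply]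

lemma hYZ : σY * σZ = (-1 : ℂ) • (σZ * σY) := by
  ext i j; fin_cases i <;> fin_cases j <;>
    simp [σY, σZ, Matrix.mul_fin_two, Matrix.smul_apply]

lemma hZXY : σZ * σX * σY = Complex.I • 1 := by
  ext i j; fin_cases i <;> fin_cases j <;>
    simp [σX, σY, σZ, Matrix.mul_fin_two, Matrix.smul_apply, Matrix.one_fin_two]

theorem stmt_17 :
    (A₁ ^ 2 = 1 ∧ A₂ ^ 2 = 1 ∧ A₃ ^ 2 = 1 ∧ A₄ ^ 2 = 1 ∧ A₅ ^ 2 = 1 ∧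
      A₆ ^ 2 = 1 ∧ A₇ ^ 2 = 1 ∧ A₈ ^ 2 = 1 ∧ A₉ ^ 2 = 1) ∧
    (Commute A₁ A₂ ∧ Commute A₁ A₃ ∧ Commute A₂ A₃) ∧
    (Commute A₄ A₅ ∧ Commute A₄ A₆ ∧ Commute A₅ A₆) ∧
    (Commute A₇ A₈ ∧ Commute A₇ A₉ ∧ Commute A₈ A₉) ∧
    (Commute A₁ A₄ ∧ Commute A₁ A₇ ∧ Commute A₄ A₇) ∧
    (Commute A₂ A₅ ∧ Commute A₂ A₈ ∧ Commute A₅ A₈) ∧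
    (Commute A₃ A₆ ∧ Commute A₃ A₉ ∧ Commute A₆ A₉) ∧
    (A₁ * A₂ * A₃ = 1 ∧ A₄ * A₅ * A₆ = 1 ∧ A₇ * A₈ * A₉ = 1 ∧
      A₁ * A₄ * A₇ = 1 ∧ A₂ * A₅ * A₈ = 1) ∧
    A₃ * A₆ * A₉ = -1 := by
  refine ⟨⟨?_,?_,?_,?_,?_,?_,?_,?_,?_⟩,⟨?_,?_,?_⟩,⟨?_,?_,?_⟩,⟨?_,?_,?_⟩,
    ⟨?_,?_,?_⟩,⟨?_,?_,?_⟩,⟨?_,?_,?_⟩,⟨?_,?_,?_,?_,?_⟩,?_⟩ <;>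
  · simp only [Commute, SemiconjBy, pow_two, A₁, A₂, A₃, A₄, A₅, A₆, A₇, A₈, A₉,
      ← Matrix.mul_kronecker_mul, one_mul, mul_one]
    try simp [hXX, hYY, hZZ, hXZ, hYX, hYZ, hZXY, Matrix.smul_kronecker,
      Matrix.kronecker_smul, Matrix.one_kronecker_one, smul_smul,
      smul_mul_assoc, mul_smul_comm, Complex.I_mul_I, neg_smul, one_smul,
      neg_neg, neg_kron, kron_neg]
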